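/- In the Trimmed Graphical Lasso deterministic setting, under hypotheses (H1)–(H4) and assuming the off-diagonal support S of Θ* satisfies |S| ≤ k, the following master inequality holds: κ‖Δ̃‖_F² ≤ (3λ/2)·Σ_{(i,j)∈S}|Δ̃_{ij}| + (λ/2)·Σ_{i=1}^p |Δ̃_{ii}| − (λ/2)·Σ_{(i,j)∉S, i≠j}|Δ̃_{ij}| + τ1‖Δ̃‖_F. (Display (17) in the proof of Theorem 1.) -/

import Mathlib

open Matrix
set_option maxHeartbeats 1000000

/-- Trace inner product ⟨U,V⟩ = tr(U Vᵀ). -/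
noncomputable def traceInner {p : ℕ} (U V : Matrix (Fin p) (Fin p) ℝ) : ℝ :=
  (U * Vᵀ).trace

/-- Frobenius norm. -/
noncomputable def frobNorm {p : ℕ} (U : Matrix (Fin p) (Fin p) ℝ) : ℝ :=
  Real.sqrt (∑ i, ∑ j, (U i j) ^ 2)

/-- Entrywise ℓ1 norm: ‖U‖₁ = Σ_{i,j} |U_{ij}|. -/
noncomputable def l1Norm {p : ℕ} (U : Matrix (Fin p) (Fin p) ℝ) : ℝ :=
  ∑ i, ∑ j, |U i j|

/-- Off-diagonal entrywise ℓ1 norm: ‖U‖_{1,off} = Σ_{i≠j} |U_{ij}|. -/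
noncomputable def offNorm {p : ℕ} (U : Matrix (Fin p) (Fin p) ℝ) : ℝ :=
  ∑ ij ∈ Finset.univ.filter (fun ij : Fin p × Fin p => ij.1 ≠ ij.2), |U ij.1 ij.2|

/-- Entrywise sup norm: ‖U‖_∞ = max_{i,j} |U_{ij}|. -/
noncomputable def linfNorm {p : ℕ} (U : Matrix (Fin p) (Fin p) ℝ) : ℝ :=
  ⨆ ij : Fin p × Fin p, |U ij.1 ij.2|

lemma traceInner_eq {p : ℕ} (U V : Matrix (Fin p) (Fin p) ℝ) :
    traceInner U V = ∑ i, ∑ j, U i j * V i j := by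
  simp [traceInner, Matrix.trace, Matrix.diag, Matrix.mul_apply, Matrix.transpose_apply]

lemma traceInner_sub_left {p : ℕ} (U V W : Matrix (Fin p) (Fin p) ℝ) :
    traceInner (U - V) W = traceInner U W - traceInner V W := by
  simp only [traceInner_eq, Matrix.sub_apply, sub_mul, Finset.sum_sub_distrib]

lemma traceInner_add_left {p : ℕ} (U V W : Matrix (Fin p) (Fin p) ℝ) :
    traceInner (U + V) W = traceInner U W + traceInner V W := by
  simp only [traceInner_eq, Matrix.add_apply, add_mul, Finset.sum_add_distrib]

lemma traceInner_smul_right {p : ℕ} (U V : Matrix (Fin p) (Fin p) ℝ) (c : ℝ) :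
    traceInner U (c • V) = c * traceInner U V := by
  simp only [traceInner_eq, Matrix.smul_apply, smul_eq_mul, Finset.mul_sum]
  congr 1; ext i; congr 1; ext j; ring

lemma entry_le_linf {p : ℕ} (U : Matrix (Fin p) (Fin p) ℝ) (i j : Fin p) :
    |U i j| ≤ linfNorm U := by
  rw [linfNorm]
  exact le_ciSup (f := fun ij : Fin p × Fin p => |U ij.1 ij.2|)
    (Set.Finite.bddAbove (Set.finite_range _)) ⟨i, j⟩

lemma holder {p : ℕ} (U V : Matrix (Fin p) (Fin p) ℝ) :
    |traceInner U V| ≤ linfNorm U * l1Norm V := by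
  rw [traceInner_eq, l1Norm, Finset.mul_sum]
  refine (Finset.abs_sum_le_sum_abs _ _).trans (Finset.sum_le_sum fun i _ => ?_)
  rw [Finset.mul_sum]
  refine (Finset.abs_sum_le_sum_abs _ _).trans (Finset.sum_le_sum fun j _ => ?_)
  rw [abs_mul]
  exact mul_le_mul_of_nonneg_right (entry_le_linf U i j) (abs_nonneg _)

lemma frobNorm_nonneg {p : ℕ} (U : Matrix (Fin p) (Fin p) ℝ) : 0 ≤ frobNorm U :=
  Real.sqrt_nonneg _

lemma frobNorm_smul {p : ℕ} (c : ℝ) (U : Matrix (Fin p) (Fin p) ℝ) :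
    frobNorm (c • U) = |c| * frobNorm U := by
  rw [frobNorm, frobNorm]
  have : ∑ i, ∑ j, ((c • U) i j) ^ 2 = c ^ 2 * ∑ i, ∑ j, (U i j) ^ 2 := by
    simp only [Matrix.smul_apply, smul_eq_mul, Finset.mul_sum, mul_pow]
  rw [this, Real.sqrt_mul (sq_nonneg c), Real.sqrt_sq_eq_abs]

lemma posDef_real_smul {p : ℕ} {A : Matrix (Fin p) (Fin p) ℝ} (hA : A.PosDef)
    {c : ℝ} (hc : 0 < c) : (c • A).PosDef := by
  exact hA.smul hc

lemma trace_mul_transpose_self_nonneg {p : ℕ} (C : Matrix (Fin p) (Fin p) ℝ) :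
    0 ≤ (C * Cᵀ).trace := by
  rw [show (C * Cᵀ).trace = traceInner C C from rfl, traceInner_eq]
  exact Finset.sum_nonneg fun i _ => Finset.sum_nonneg fun j _ => mul_self_nonneg _

open scoped MatrixOrder in
lemma psd_trace {p : ℕ} {A B : Matrix (Fin p) (Fin p) ℝ}
    (hA : A.PosDef) (hB : B.PosDef) :
    0 ≤ traceInner (A⁻¹ - B⁻¹) (B - A) := by
  have hAi := hA.inv
  have hBi := hB.inv
  have hfac : A⁻¹ - B⁻¹ = A⁻¹ * (B - A) * B⁻¹ := by
    rw [Matrix.mul_sub, Matrix.sub_mul, Matrix.mul_assoc,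
      Matrix.mul_nonsing_inv _ (isUnit_iff_isUnit_det _ |>.1 hB.isUnit),
      Matrix.nonsing_inv_mul _ (isUnit_iff_isUnit_det _ |>.1 hA.isUnit)]
    simp [Matrix.mul_one]
  set M := B - A with hMdef
  have hMt : Mᵀ = M := by
    have := (hB.1.sub hA.1)
    rwa [Matrix.IsHermitian, conjTranspose_eq_transpose_of_trivial] at this
  set S := CFC.sqrt A⁻¹ with hSdef
  set T := CFC.sqrt B⁻¹ with hTdef
  have hS2 : S * S = A⁻¹ := CFC.sqrt_mul_sqrt_self _ hAi.posSemidef.nonneg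
  have hT2 : T * T = B⁻¹ := CFC.sqrt_mul_sqrt_self _ hBi.posSemidef.nonneg
  have hSt : Sᵀ = S := by
    have := (CFC.sqrt_nonneg A⁻¹).posSemidef.1
    rwa [Matrix.IsHermitian, conjTranspose_eq_transpose_of_trivial] at this
  have hTt : Tᵀ = T := by
    have := (CFC.sqrt_nonneg B⁻¹).posSemidef.1
    rwa [Matrix.IsHermitian, conjTranspose_eq_transpose_of_trivial] at this
  set C := S * M * T with hCdef
  have e1 : C * Cᵀ = S * (M * (T * (T * M))) * S := by
    rw [hCdef, Matrix.transpose_mul, Matrix.transpose_mul, hSt, hTt, hMt]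
    simp only [Matrix.mul_assoc]
  have e2 : (C * Cᵀ).trace = traceInner (A⁻¹ - B⁻¹) M := by
    rw [e1, Matrix.trace_mul_cycle, hS2, traceInner, hfac, hMt]
    congr 1
    rw [show M * (T * (T * M)) = M * (T * T * M) by simp only [Matrix.mul_assoc], hT2]
    simp only [Matrix.mul_assoc]
  rw [← e2]
  exact trace_mul_transpose_self_nonneg _

lemma l1_eq_diag_add_off {p : ℕ} (U : Matrix (Fin p) (Fin p) ℝ) :
    l1Norm U = (∑ i, |U i i|) + offNorm U := by
  rw [l1Norm, offNorm, show (∑ i, ∑ j, |U i j|) = ∑ ij : Fin p × Fin p, |U ij.1 ij.2|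
    from (Fintype.sum_prod_type (fun ij : Fin p × Fin p => |U ij.1 ij.2|)).symm]
  rw [← Finset.sum_filter_add_sum_filter_not Finset.univ
    (fun ij : Fin p × Fin p => ij.1 ≠ ij.2)]
  rw [add_comm]
  congr 1
  rw [Finset.sum_filter, Fintype.sum_prod_type]
  simp

/-- Display (17) in the proof of Theorem 1: the master inequality. -/
theorem master_inequality
    (p n h : ℕ) (hp : 0 < p) (hn : 0 < n) (hh : 0 < h)
    (x : Fin n → Fin p → ℝ)
    (Θstar Θtil : Matrix (Fin p) (Fin p) ℝ)
    (hΘstar : Θstar.PosDef) (hΘtil : Θtil.PosDef)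
    (R : ℝ) (hR : 0 < R) (hΘstarR : l1Norm Θstar ≤ R) (hΘtilR : l1Norm Θtil ≤ R)
    (wtil wstar : Fin n → ℝ)
    (hwtil : ∀ i, wtil i ∈ Set.Icc (0 : ℝ) 1) (hwstar : ∀ i, wstar i ∈ Set.Icc (0 : ℝ) 1)
    (κ τ₁ τ₂ lam : ℝ) (hκ : 0 < κ) (hτ₁ : 0 ≤ τ₁) (hτ₂ : 0 ≤ τ₂) (hlam : 0 < lam)
    (H1 : traceInner
        ((1 / (h : ℝ)) • ∑ i, wtil i • Matrix.vecMulVec (x i) (x i) - Θtil⁻¹)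
        (Θtil - Θstar) ≤ lam * (offNorm Θstar - offNorm Θtil))
    (H2 : ∀ Δ : Matrix (Fin p) (Fin p) ℝ, Δ.IsSymm → (Θstar + Δ).PosDef →
        frobNorm Δ ≤ 1 →
        traceInner (Θstar⁻¹ - (Θstar + Δ)⁻¹) Δ ≥ κ * (frobNorm Δ) ^ 2)
    (H3 : |traceInner
        ((1 / (h : ℝ)) • ∑ i, (wtil i - wstar i) • Matrix.vecMulVec (x i) (x i))
        (Θtil - Θstar)|
        ≤ τ₁ * frobNorm (Θtil - Θstar) + τ₂ * l1Norm (Θtil - Θstar))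
    (H4a : 4 * max
        (linfNorm ((1 / (h : ℝ)) • ∑ i, wstar i • Matrix.vecMulVec (x i) (x i) - Θstar⁻¹))
        τ₂ ≤ lam)
    (H4b : lam ≤ (κ - τ₁) / (3 * R))
    (k : ℕ)
    (hk : (Finset.univ.filter
        (fun ij : Fin p × Fin p => ij.1 ≠ ij.2 ∧ Θstar ij.1 ij.2 ≠ 0)).card ≤ k) :
    κ * (frobNorm (Θtil - Θstar)) ^ 2 ≤
      (3 * lam / 2) * (∑ ij ∈ Finset.univ.filter (fun ij : Fin p × Fin p => ij.1 ≠ ij.2 ∧ Θstar ij.1 ij.2 ≠ 0),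
          |(Θtil - Θstar) ij.1 ij.2|)
        + (lam / 2) * (∑ i, |(Θtil - Θstar) i i|)
        - (lam / 2) * (∑ ij ∈ (Finset.univ.filter (fun ij : Fin p × Fin p => ij.1 ≠ ij.2)) \
            (Finset.univ.filter (fun ij : Fin p × Fin p => ij.1 ≠ ij.2 ∧ Θstar ij.1 ij.2 ≠ 0)),
            |(Θtil - Θstar) ij.1 ij.2|)
        + τ₁ * frobNorm (Θtil - Θstar) := by
  set Sigt := (1 / (h : ℝ)) • ∑ i, wtil i • Matrix.vecMulVec (x i) (x i) with hSigt
  set Sigs := (1 / (h : ℝ)) • ∑ i, wstar i • Matrix.vecMulVec (x i) (x i) with hSigs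
  set Δ := Θtil - Θstar with hΔ
  set Sset := Finset.univ.filter
    (fun ij : Fin p × Fin p => ij.1 ≠ ij.2 ∧ Θstar ij.1 ij.2 ≠ 0) with hSsetdef
  set Off := Finset.univ.filter (fun ij : Fin p × Fin p => ij.1 ≠ ij.2) with hOffdef
  set F := frobNorm Δ with hFdef
  set DS := ∑ ij ∈ Sset, |Δ ij.1 ij.2| with hDSdef
  set Dd := ∑ i, |Δ i i| with hDddef
  set Dc := ∑ ij ∈ Off \ Sset, |Δ ij.1 ij.2| with hDcdef
  set L1 := l1Norm Δ with hL1def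
  -- basic nonnegativity
  have hDS0 : 0 ≤ DS := Finset.sum_nonneg fun _ _ => abs_nonneg _
  have hDc0 : 0 ≤ Dc := Finset.sum_nonneg fun _ _ => abs_nonneg _
  have hDd0 : 0 ≤ Dd := Finset.sum_nonneg fun _ _ => abs_nonneg _
  have hF0 : 0 ≤ F := frobNorm_nonneg _
  -- subset
  have hsub : Sset ⊆ Off := Finset.monotone_filter_right _ (fun ij _ h => h.1)
  -- L1 decomposition
  have hoffΔ : offNorm Δ = Dc + DS := by
    rw [offNorm, ← hOffdef, ← Finset.sum_sdiff hsub]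
  have hL1split : L1 = Dd + (Dc + DS) := by
    rw [hL1def, l1_eq_diag_add_off, hoffΔ]
  have hL10 : 0 ≤ L1 := by rw [hL1split]; linarith
  -- L1 ≤ 2R
  have hL1R : L1 ≤ 2 * R := by
    have : l1Norm Δ ≤ l1Norm Θtil + l1Norm Θstar := by
      rw [l1Norm, l1Norm, l1Norm, ← Finset.sum_add_distrib]
      refine Finset.sum_le_sum fun i _ => ?_
      rw [← Finset.sum_add_distrib]
      refine Finset.sum_le_sum fun j _ => ?_
      simpa [hΔ, Matrix.sub_apply] using abs_sub (Θtil i j) (Θstar i j)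
    rw [hL1def]; linarith
  -- off norm bound
  have hstar0 : ∀ ij ∈ Off \ Sset, Θstar ij.1 ij.2 = 0 := by
    intro ij hij
    rw [Finset.mem_sdiff, hOffdef, hSsetdef, Finset.mem_filter, Finset.mem_filter] at hij
    by_contra hne
    exact hij.2 ⟨Finset.mem_univ _, hij.1.2, hne⟩
  have hoffbound : offNorm Θstar - offNorm Θtil ≤ DS - Dc := by
    have e1 : offNorm Θstar = ∑ ij ∈ Off \ Sset, |Θstar ij.1 ij.2| + ∑ ij ∈ Sset, |Θstar ij.1 ij.2| := by
      rw [offNorm, ← hOffdef, ← Finset.sum_sdiff hsub]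
    have e1' : ∑ ij ∈ Off \ Sset, |Θstar ij.1 ij.2| = 0 :=
      Finset.sum_eq_zero fun ij hij => by rw [hstar0 ij hij, abs_zero]
    have e2 : offNorm Θtil = ∑ ij ∈ Off \ Sset, |Θtil ij.1 ij.2| + ∑ ij ∈ Sset, |Θtil ij.1 ij.2| := by
      rw [offNorm, ← hOffdef, ← Finset.sum_sdiff hsub]
    have e2' : ∑ ij ∈ Off \ Sset, |Θtil ij.1 ij.2| = Dc := by
      rw [hDcdef]
      refine Finset.sum_congr rfl fun ij hij => ?_
      rw [hΔ, Matrix.sub_apply, hstar0 ij hij, sub_zero]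
    have e3 : ∑ ij ∈ Sset, (|Θstar ij.1 ij.2| - |Θtil ij.1 ij.2|) ≤ DS := by
      rw [hDSdef]
      refine Finset.sum_le_sum fun ij _ => ?_
      calc |Θstar ij.1 ij.2| - |Θtil ij.1 ij.2| ≤ |Θstar ij.1 ij.2 - Θtil ij.1 ij.2| :=
            abs_sub_abs_le_abs_sub _ _
        _ = |Δ ij.1 ij.2| := by rw [hΔ, Matrix.sub_apply, abs_sub_comm]
    rw [e1, e1', e2, e2', Finset.sum_sub_distrib] at *
    linarith
  -- symmetry of Δ
  have hΘst : Θstarᵀ = Θstar := by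
    have := hΘstar.1
    rwa [Matrix.IsHermitian, conjTranspose_eq_transpose_of_trivial] at this
  have hΘtt : Θtilᵀ = Θtil := by
    have := hΘtil.1
    rwa [Matrix.IsHermitian, conjTranspose_eq_transpose_of_trivial] at this
  have hΔsymm : Δ.IsSymm := by
    rw [Matrix.IsSymm, hΔ, Matrix.transpose_sub, hΘst, hΘtt]
  -- key upper bound
  have hSigdiff : (1 / (h : ℝ)) • ∑ i, (wtil i - wstar i) • Matrix.vecMulVec (x i) (x i)
      = Sigt - Sigs := by
    rw [hSigt, hSigs, ← smul_sub, ← Finset.sum_sub_distrib]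
    congr 1
    refine Finset.sum_congr rfl fun i _ => ?_
    rw [sub_smul]
  have hlinf : linfNorm (Sigs - Θstar⁻¹) ≤ lam / 4 := by
    have h1 := le_max_left (linfNorm (Sigs - Θstar⁻¹)) τ₂
    linarith
  have hτ₂lam : τ₂ ≤ lam / 4 := by
    have h1 := le_max_right (linfNorm (Sigs - Θstar⁻¹)) τ₂
    linarith
  have hb3 : |traceInner (Sigs - Θstar⁻¹) Δ| ≤ (lam / 4) * L1 := by
    refine (holder _ _).trans ?_
    exact mul_le_mul_of_nonneg_right hlinf hL10
  have hb2 : |traceInner (Sigt - Sigs) Δ| ≤ τ₁ * F + (lam / 4) * L1 := by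
    rw [hSigdiff] at H3
    refine H3.trans ?_
    have h5 : τ₂ * L1 ≤ (lam / 4) * L1 := mul_le_mul_of_nonneg_right hτ₂lam hL10
    linarith
  have key1 : traceInner (Θstar⁻¹ - Θtil⁻¹) Δ ≤
      lam * (offNorm Θstar - offNorm Θtil) + τ₁ * F + (lam / 2) * L1 := by
    have e0 : Θstar⁻¹ - Θtil⁻¹ = (Sigt - Θtil⁻¹) - (Sigt - Sigs) - (Sigs - Θstar⁻¹) := by abel
    rw [e0, traceInner_sub_left, traceInner_sub_left]
    have a2 := abs_le.1 hb2
    have a3 := abs_le.1 hb3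
    linarith [H1]
  have hofflam : lam * (offNorm Θstar - offNorm Θtil) ≤ lam * DS - lam * Dc := by
    have := mul_le_mul_of_nonneg_left hoffbound (le_of_lt hlam)
    nlinarith [this]
  have key1' : traceInner (Θstar⁻¹ - Θtil⁻¹) Δ ≤
      (3 * lam / 2) * DS + (lam / 2) * Dd - (lam / 2) * Dc + τ₁ * F := by
    have hLexp : (lam / 2) * L1 = (lam / 2) * Dd + (lam / 2) * Dc + (lam / 2) * DS := by
      rw [hL1split]; ring
    nlinarith [key1, hofflam, hLexp]
  -- Frobenius norm is at most 1
  have h3R : lam * (3 * R) ≤ κ - τ₁ := (le_div_iff₀ (by positivity)).1 H4b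
  have hκτ : 0 < κ - τ₁ := lt_of_lt_of_le (by positivity) h3R
  have hup : traceInner (Θstar⁻¹ - Θtil⁻¹) Δ ≤ κ - τ₁ + τ₁ * F := by
    have e1 : (3 * lam / 2) * DS + (lam / 2) * Dd - (lam / 2) * Dc ≤ (3 * lam / 2) * L1 := by
      have hLexp : (3 * lam / 2) * L1
          = (3 * lam / 2) * Dd + (3 * lam / 2) * Dc + (3 * lam / 2) * DS := by
        rw [hL1split]; ring
      nlinarith [mul_nonneg (le_of_lt hlam) hDd0, mul_nonneg (le_of_lt hlam) hDc0]
    have e2 : (3 * lam / 2) * L1 ≤ (3 * lam / 2) * (2 * R) :=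
      mul_le_mul_of_nonneg_left hL1R (by positivity)
    have e3 : (3 * lam / 2) * (2 * R) = lam * (3 * R) := by ring
    linarith [key1']
  have hF1 : F ≤ 1 := by
    by_contra hF1
    push_neg at hF1
    set t := F⁻¹ with htdef
    have ht0 : 0 < t := by positivity
    have ht1 : t < 1 := by
      rw [htdef]
      exact inv_lt_one_of_one_lt₀ hF1
    have htF : t * F = 1 := inv_mul_cancel₀ (by linarith)
    have hconv : Θstar + t • Δ = (1 - t) • Θstar + t • Θtil := by
      rw [hΔ]; simp only [smul_sub, sub_smul, one_smul]; abel
    have hpos : (Θstar + t • Δ).PosDef := by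
      rw [hconv]
      exact (posDef_real_smul hΘstar (by linarith)).add (posDef_real_smul hΘtil ht0)
    have hsymm : (t • Δ).IsSymm := by
      rw [Matrix.IsSymm, Matrix.transpose_smul, hΔsymm]
    have hfrob : frobNorm (t • Δ) = 1 := by
      rw [frobNorm_smul, abs_of_pos ht0, ← hFdef, htF]
    have h2 := H2 (t • Δ) hsymm hpos (le_of_eq hfrob)
    rw [hfrob, traceInner_smul_right] at h2
    set z1 := traceInner (Θstar⁻¹ - (Θstar + t • Δ)⁻¹) Δ with hz1
    set z2 := traceInner ((Θstar + t • Δ)⁻¹ - Θtil⁻¹) Δ with hz2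
    have hge : κ * F ≤ z1 := by
      have h6 : F * (κ * 1 ^ 2) ≤ F * (t * z1) :=
        mul_le_mul_of_nonneg_left h2 hF0
      have h7 : F * (t * z1) = z1 := by
        rw [← mul_assoc, mul_comm F t, htF, one_mul]
      have h8 : F * (κ * 1 ^ 2) = κ * F := by ring
      linarith
    have hmono : 0 ≤ z2 := by
      have hpt := psd_trace hpos hΘtil
      have hsd : Θtil - (Θstar + t • Δ) = (1 - t) • Δ := by
        rw [hΔ]; simp only [smul_sub, sub_smul, one_smul]; abel
      rw [hsd, traceInner_smul_right] at hpt
      have h9 : (0:ℝ) < 1 - t := by linarith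
      exact nonneg_of_mul_nonneg_right hpt h9
    have hsplit : traceInner (Θstar⁻¹ - Θtil⁻¹) Δ = z1 + z2 := by
      rw [hz1, hz2, ← traceInner_add_left]
      congr 1
      abel
    rw [hsplit] at hup
    nlinarith [mul_pos hκτ (show (0:ℝ) < F - 1 by linarith)]
  -- main application of H2
  have hΘeq : Θstar + Δ = Θtil := by rw [hΔ]; abel
  have h2 := H2 Δ hΔsymm (by rw [hΘeq]; exact hΘtil) hF1
  rw [hΘeq] at h2
  linarith [key1', h2]
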